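/- Let f, fₙ : ℝ → [−∞,∞] be convex with fₙ → f pointwise, suppose m := inf_{ℝ} f ∈ ℝ, and suppose there exist real u < v with f > m + 1 outside [u, v] and f(w) < m + 1 for some w ∈ [u, v]. Then eventually (for all sufficiently large n) inf_{ℝ} fₙ = inf_{[u−1, v+1]} fₙ. -/
import Mathlib

/-- Quasiconvexity from a convex epigraph: if `a ≤ b ≤ c` and both `F a, F c ≤ r`,
then `F b ≤ r`. -/
lemma epi_quasi (F : ℝ → EReal)
    (h : Convex ℝ {p : ℝ × ℝ | F p.1 ≤ (p.2 : EReal)})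
    {a b c : ℝ} (hab : a ≤ b) (hbc : b ≤ c) (r : ℝ)
    (ha : F a ≤ (r : EReal)) (hc : F c ≤ (r : EReal)) : F b ≤ (r : EReal) := by
  have hb : b ∈ segment ℝ a c := by
    rw [segment_eq_Icc (hab.trans hbc)]
    exact ⟨hab, hbc⟩
  obtain ⟨ta, tb, hta, htb, hsum, heq⟩ := hb
  have := h (show (a, r) ∈ _ from ha) (show (c, r) ∈ _ from hc) hta htb hsum
  have h2 : (ta • ((a : ℝ), r) + tb • ((c : ℝ), r)) = (b, r) := by
    simp only [smul_eq_mul] at heq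
    simp only [Prod.smul_def, Prod.mk_add_mk, Prod.ext_iff, smul_eq_mul, Prod.fst_add, Prod.snd_add]
    constructor
    · linarith
    · rw [← add_mul, hsum, one_mul]
  rwa [h2] at this

theorem stmt_16 (f : ℝ → EReal) (F : ℕ → ℝ → EReal)
    (hf : Convex ℝ {p : ℝ × ℝ | f p.1 ≤ (p.2 : EReal)})
    (hF : ∀ n, Convex ℝ {p : ℝ × ℝ | F n p.1 ≤ (p.2 : EReal)})
    (hconv : ∀ x : ℝ, Filter.Tendsto (fun n => F n x) Filter.atTop (nhds (f x)))
    (m : ℝ) (hm : (⨅ x : ℝ, f x) = (m : EReal))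
    (u v : ℝ) (huv : u < v)
    (hout : ∀ x : ℝ, x ∉ Set.Icc u v → ((m + 1 : ℝ) : EReal) < f x)
    (hin : ∃ w ∈ Set.Icc u v, f w < ((m + 1 : ℝ) : EReal)) :
    ∀ᶠ n in Filter.atTop,
      (⨅ x : ℝ, F n x) = ⨅ x ∈ Set.Icc (u - 1) (v + 1), F n x := by
  obtain ⟨w, hw, hfw⟩ := hin
  have hout1 : ((m + 1 : ℝ) : EReal) < f (u - 1) :=
    hout _ (fun h => by have := h.1; have := h.2; linarith)
  have hout2 : ((m + 1 : ℝ) : EReal) < f (v + 1) :=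
    hout _ (fun h => by have := h.1; have := h.2; linarith)
  have h1 : ∀ᶠ n in Filter.atTop, F n w < ((m + 1 : ℝ) : EReal) :=
    (hconv w).eventually_lt_const hfw
  have h2 : ∀ᶠ n in Filter.atTop, ((m + 1 : ℝ) : EReal) < F n (u - 1) :=
    (hconv (u - 1)).eventually_const_lt hout1
  have h3 : ∀ᶠ n in Filter.atTop, ((m + 1 : ℝ) : EReal) < F n (v + 1) :=
    (hconv (v + 1)).eventually_const_lt hout2
  filter_upwards [h1, h2, h3] with n hn1 hn2 hn3
  have hwmem : w ∈ Set.Icc (u - 1) (v + 1) :=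
    ⟨by linarith [hw.1], by linarith [hw.2]⟩
  -- key: for x outside the big interval, F n w ≤ F n x
  have key : ∀ x : ℝ, x ∉ Set.Icc (u - 1) (v + 1) → F n w ≤ F n x := by
    intro x hx
    by_contra hlt
    push_neg at hlt
    obtain ⟨r, hr1, hr2⟩ := EReal.lt_iff_exists_real_btwn.mp hn1
    have hxr : F n x ≤ (r : EReal) := (hlt.trans hr1).le
    have hwr : F n w ≤ (r : EReal) := hr1.le
    rw [Set.mem_Icc, not_and_or, not_le, not_le] at hx
    rcases hx with hx | hx
    · have := epi_quasi (F n) (hF n) (le_of_lt hx) (by linarith [hw.1] : u - 1 ≤ w) r hxr hwr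
      exact absurd (this.trans_lt hr2) (not_lt.mpr hn2.le)
    · have := epi_quasi (F n) (hF n) (by linarith [hw.2] : w ≤ v + 1) (le_of_lt hx) r hwr hxr
      exact absurd (this.trans_lt hr2) (not_lt.mpr hn3.le)
  apply le_antisymm
  · exact le_iInf₂ fun x _ => iInf_le _ x
  · refine le_iInf fun x => ?_
    by_cases hx : x ∈ Set.Icc (u - 1) (v + 1)
    · exact iInf₂_le x hx
    · exact le_trans (iInf₂_le w hwmem) (key x hx)
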